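/- If the estimated DoA unit vectors satisfy ‖u_k − û_k‖ ≤ ε for true unit directions û_k, all rays pass through the true source s₀ (i.e., (I − û_k û_kᵀ)(s₀ − p_k) = 0), the true matrix Â = Σ_k w_k (I − û_k û_kᵀ) has smallest eigenvalue λ_min > 0, and ‖s₀ − p_k‖ ≤ R, Σ_k w_k = W, then for sufficiently small ε the perturbed estimate s* = A⁻¹ Σ_k w_k P_k p_k satisfies ‖s* − s₀‖ ≤ C ε for a constant C depending only on λ_min, W, R. -/

import Mathlib

open Matrix BigOperators

noncomputable def en (x : Fin 3 → ℝ) : ℝ := ‖(WithLp.equiv 2 (Fin 3 → ℝ)).symm x‖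

lemma en_nonneg (x : Fin 3 → ℝ) : 0 ≤ en x := norm_nonneg _

lemma en_sq (x : Fin 3 → ℝ) : en x ^ 2 = ∑ i, x i ^ 2 := by
  rw [en, EuclideanSpace.norm_eq, Real.sq_sqrt (by positivity)]
  simp [Real.norm_eq_abs, sq_abs]

lemma en_eq_sqrt (x : Fin 3 → ℝ) : en x = Real.sqrt (∑ i, x i ^ 2) := by
  rw [← en_sq, Real.sqrt_sq (en_nonneg x)]

lemma en_add (x y : Fin 3 → ℝ) : en (x + y) ≤ en x + en y := norm_add_le _ _

lemma en_smul (c : ℝ) (x : Fin 3 → ℝ) : en (c • x) = |c| * en x := by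
  rw [en, en]
  exact norm_smul c _

lemma en_neg (x : Fin 3 → ℝ) : en (-x) = en x := norm_neg _

lemma en_sum {K : ℕ} (f : Fin K → Fin 3 → ℝ) : en (∑ k, f k) ≤ ∑ k, en (f k) :=
  by
  have h := norm_sum_le (E := EuclideanSpace ℝ (Fin 3)) Finset.univ
    (fun k => (WithLp.equiv 2 (Fin 3 → ℝ)).symm (f k))
  have e : (WithLp.equiv 2 (Fin 3 → ℝ)).symm (∑ k, f k) =
      ∑ k, (WithLp.equiv 2 (Fin 3 → ℝ)).symm (f k) := by
    ext i; simp
  unfold en; rw [e]; exact h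

lemma en_cs (x y : Fin 3 → ℝ) : |x ⬝ᵥ y| ≤ en x * en y := by
  have h := abs_real_inner_le_norm ((WithLp.equiv 2 (Fin 3 → ℝ)).symm x)
    ((WithLp.equiv 2 (Fin 3 → ℝ)).symm y)
  rw [PiLp.inner_apply] at h
  simpa [dotProduct, mul_comm, en] using h

lemma vecMulVec_mulVec' (a b x : Fin 3 → ℝ) :
    (vecMulVec a b).mulVec x = (b ⬝ᵥ x) • a := by
  funext i
  simp only [Matrix.mulVec, dotProduct, vecMulVec_apply, Pi.smul_apply, smul_eq_mul,
    Finset.sum_mul, Finset.mul_sum]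
  exact Finset.sum_congr rfl fun j _ => by ring

lemma sum_mulVec' {K : ℕ} (M : Fin K → Matrix (Fin 3) (Fin 3) ℝ) (x : Fin 3 → ℝ) :
    (∑ k, M k).mulVec x = ∑ k, (M k).mulVec x := by
  funext i
  simp only [Matrix.mulVec, dotProduct, Finset.sum_apply, Finset.sum_mul,
    Matrix.sum_apply]
  exact Finset.sum_comm

lemma en_le_of (x : Fin 3 → ℝ) (r : ℝ) (hr : 0 ≤ r) (h : ∑ i, x i ^ 2 ≤ r ^ 2) :
    en x ≤ r := by
  rw [en_eq_sqrt]
  calc Real.sqrt (∑ i, x i ^ 2) ≤ Real.sqrt (r ^ 2) := Real.sqrt_le_sqrt h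
  _ = r := Real.sqrt_sq hr

lemma dotProduct_sum' {K : ℕ} (x : Fin 3 → ℝ) (f : Fin K → Fin 3 → ℝ) :
    x ⬝ᵥ (∑ k, f k) = ∑ k, x ⬝ᵥ f k := by
  simp only [dotProduct, Finset.sum_apply, Finset.mul_sum]
  exact Finset.sum_comm

/-- Stability of continuous localization: if the noisy unit DoA vectors `u_k`
are within `ε` of true unit directions `û_k` whose rays all pass through the
true source `s₀`, the true matrix `Â` has smallest eigenvalue `≥ λmin > 0`,
`Σ w_k = W`, and `‖s₀ - p_k‖ ≤ R`, then for sufficiently small `ε` the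
perturbed estimate satisfies `‖s* - s₀‖ ≤ C ε`, with `C` depending only on
`λmin, W, R`. -/
theorem stmt18 (lammin W R : ℝ) (hlam : 0 < lammin) (hW : 0 < W) (hR : 0 < R) :
    ∃ C > (0 : ℝ), ∃ ε₀ > (0 : ℝ), ∀ (ε : ℝ), 0 < ε → ε ≤ ε₀ →
      ∀ (K : ℕ) (u uh : Fin K → Fin 3 → ℝ) (w : Fin K → ℝ)
        (p : Fin K → Fin 3 → ℝ) (s₀ : Fin 3 → ℝ),
      (∀ k, ∑ i, u k i ^ 2 = 1) →
      (∀ k, ∑ i, uh k i ^ 2 = 1) →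
      (∀ k, 0 < w k) →
      (∑ k, w k) = W →
      (∀ k, ∑ i, (u k i - uh k i) ^ 2 ≤ ε ^ 2) →
      (∀ k, ((1 : Matrix (Fin 3) (Fin 3) ℝ) - Matrix.vecMulVec (uh k) (uh k)).mulVec
          (s₀ - p k) = 0) →
      (∀ x : Fin 3 → ℝ, lammin * ∑ i, x i ^ 2 ≤
          x ⬝ᵥ (∑ k, w k • ((1 : Matrix (Fin 3) (Fin 3) ℝ) -
            Matrix.vecMulVec (uh k) (uh k))).mulVec x) →
      (∀ k, ∑ i, (s₀ i - p k i) ^ 2 ≤ R ^ 2) →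
      ∀ (A : Matrix (Fin 3) (Fin 3) ℝ),
        A = ∑ k, w k • ((1 : Matrix (Fin 3) (Fin 3) ℝ) - Matrix.vecMulVec (u k) (u k)) →
        ∀ (sstar : Fin 3 → ℝ),
          sstar = A⁻¹.mulVec (∑ k, w k •
            (((1 : Matrix (Fin 3) (Fin 3) ℝ) - Matrix.vecMulVec (u k) (u k)).mulVec (p k))) →
          IsUnit A ∧ ∑ i, (sstar i - s₀ i) ^ 2 ≤ (C * ε) ^ 2 := by
  refine ⟨4 * W * R / lammin, by positivity, lammin / (4 * W), by positivity, ?_⟩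
  intro ε hε hεle K u uh w p s₀ hu huh hw hWsum hclose hray hpd hRk A hA sstar hs
  -- basic norm facts
  have hu1 : ∀ k, en (u k) = 1 := fun k => by
    rw [en_eq_sqrt, hu k, Real.sqrt_one]
  have huh1 : ∀ k, en (uh k) = 1 := fun k => by
    rw [en_eq_sqrt, huh k, Real.sqrt_one]
  have hd : ∀ k, en (uh k - u k) ≤ ε := by
    intro k
    have : en (u k - uh k) ≤ ε := en_le_of _ _ hε.le (by
      have := hclose k
      simpa [Pi.sub_apply] using this)
    rwa [← neg_sub, en_neg]
  have hv : ∀ k, en (s₀ - p k) ≤ R := by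
    intro k
    exact en_le_of _ _ hR.le (by simpa [Pi.sub_apply] using hRk k)
  -- quadratic form lower bound for A
  have hquad : ∀ x : Fin 3 → ℝ, lammin / 2 * ∑ i, x i ^ 2 ≤ x ⬝ᵥ A.mulVec x := by
    intro x
    have hsA : x ⬝ᵥ A.mulVec x =
        ∑ k, w k * (x ⬝ᵥ ((1 : Matrix (Fin 3) (Fin 3) ℝ) -
          Matrix.vecMulVec (u k) (u k)).mulVec x) := by
      rw [hA, sum_mulVec', dotProduct_sum']
      refine Finset.sum_congr rfl fun k _ => ?_
      rw [Matrix.smul_mulVec, dotProduct_smul, smul_eq_mul]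
    have hsAh : x ⬝ᵥ (∑ k, w k • ((1 : Matrix (Fin 3) (Fin 3) ℝ) -
          Matrix.vecMulVec (uh k) (uh k))).mulVec x =
        ∑ k, w k * (x ⬝ᵥ ((1 : Matrix (Fin 3) (Fin 3) ℝ) -
          Matrix.vecMulVec (uh k) (uh k)).mulVec x) := by
      rw [sum_mulVec', dotProduct_sum']
      refine Finset.sum_congr rfl fun k _ => ?_
      rw [Matrix.smul_mulVec, dotProduct_smul, smul_eq_mul]
    have hterm : ∀ k, x ⬝ᵥ ((1 : Matrix (Fin 3) (Fin 3) ℝ) -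
          Matrix.vecMulVec (u k) (u k)).mulVec x =
        x ⬝ᵥ ((1 : Matrix (Fin 3) (Fin 3) ℝ) -
          Matrix.vecMulVec (uh k) (uh k)).mulVec x
        + ((uh k ⬝ᵥ x) ^ 2 - (u k ⬝ᵥ x) ^ 2) := by
      intro k
      rw [Matrix.sub_mulVec, Matrix.sub_mulVec, Matrix.one_mulVec,
        vecMulVec_mulVec', vecMulVec_mulVec', dotProduct_sub, dotProduct_sub,
        dotProduct_smul, dotProduct_smul, smul_eq_mul, smul_eq_mul,
        dotProduct_comm x (u k), dotProduct_comm x (uh k)]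
      ring
    have hbound : ∀ k, |(uh k ⬝ᵥ x) ^ 2 - (u k ⬝ᵥ x) ^ 2| ≤
        2 * ε * ∑ i, x i ^ 2 := by
      intro k
      have hfac : (uh k ⬝ᵥ x) ^ 2 - (u k ⬝ᵥ x) ^ 2 =
          ((uh k - u k) ⬝ᵥ x) * ((uh k + u k) ⬝ᵥ x) := by
        rw [sub_dotProduct, add_dotProduct]; ring
      rw [hfac, abs_mul]
      have h1 : |(uh k - u k) ⬝ᵥ x| ≤ ε * en x :=
        le_trans (en_cs _ _) (mul_le_mul_of_nonneg_right (hd k) (en_nonneg x))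
      have h2 : |(uh k + u k) ⬝ᵥ x| ≤ 2 * en x := by
        refine le_trans (en_cs _ _) ?_
        have : en (uh k + u k) ≤ 2 := by
          have := en_add (uh k) (u k)
          rw [huh1 k, hu1 k] at this; linarith
        exact mul_le_mul_of_nonneg_right (by linarith) (en_nonneg x)
      calc |(uh k - u k) ⬝ᵥ x| * |(uh k + u k) ⬝ᵥ x|
          ≤ (ε * en x) * (2 * en x) := by
            exact mul_le_mul h1 h2 (abs_nonneg _) (mul_nonneg hε.le (en_nonneg x))
        _ = 2 * ε * en x ^ 2 := by ring
        _ = 2 * ε * ∑ i, x i ^ 2 := by rw [en_sq]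
    have hsum : ∑ k, w k * ((uh k ⬝ᵥ x) ^ 2 - (u k ⬝ᵥ x) ^ 2) ≥
        -(lammin / 2 * ∑ i, x i ^ 2) := by
      have h1 : ∀ k ∈ Finset.univ, -(w k * (2 * ε * ∑ i, x i ^ 2)) ≤
          w k * ((uh k ⬝ᵥ x) ^ 2 - (u k ⬝ᵥ x) ^ 2) := by
        intro k _
        have := hbound k
        have hwk := (hw k).le
        nlinarith [neg_abs_le ((uh k ⬝ᵥ x) ^ 2 - (u k ⬝ᵥ x) ^ 2)]
      have h2 := Finset.sum_le_sum h1
      have h3 : ∑ k, -(w k * (2 * ε * ∑ i, x i ^ 2)) =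
          -(W * (2 * ε * ∑ i, x i ^ 2)) := by
        rw [Finset.sum_neg_distrib, ← Finset.sum_mul, hWsum]
      rw [h3] at h2
      have hWb : W * (2 * ε * ∑ i, x i ^ 2) ≤ lammin / 2 * ∑ i, x i ^ 2 := by
        have hS : (0:ℝ) ≤ ∑ i, x i ^ 2 := Finset.sum_nonneg fun i _ => sq_nonneg _
        have h4 : 2 * ε ≤ lammin / (2 * W) := by
          rw [le_div_iff₀ (by positivity)]
          rw [le_div_iff₀ (by positivity)] at hεle
          nlinarith
        calc W * (2 * ε * ∑ i, x i ^ 2) = (2 * ε) * (W * ∑ i, x i ^ 2) := by ring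
          _ ≤ (lammin / (2 * W)) * (W * ∑ i, x i ^ 2) := by
              exact mul_le_mul_of_nonneg_right h4 (by positivity)
          _ = lammin / 2 * ∑ i, x i ^ 2 := by field_simp
      linarith
    have hdecomp : x ⬝ᵥ A.mulVec x =
        x ⬝ᵥ (∑ k, w k • ((1 : Matrix (Fin 3) (Fin 3) ℝ) -
          Matrix.vecMulVec (uh k) (uh k))).mulVec x
        + ∑ k, w k * ((uh k ⬝ᵥ x) ^ 2 - (u k ⬝ᵥ x) ^ 2) := by
      rw [hsA, hsAh, ← Finset.sum_add_distrib]
      refine Finset.sum_congr rfl fun k _ => ?_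
      rw [hterm k]; ring
    have hph := hpd x
    linarith
  -- invertibility
  have hinj : Function.Injective A.mulVec := by
    have h0 : ∀ x : Fin 3 → ℝ, A.mulVec x = 0 → x = 0 := by
      intro x hx
      have hq := hquad x
      rw [hx, dotProduct_zero] at hq
      have hS : ∑ i, x i ^ 2 ≤ 0 := by nlinarith
      have hS0 : ∑ i, x i ^ 2 = 0 :=
        le_antisymm hS (Finset.sum_nonneg fun i _ => sq_nonneg _)
      funext i
      have := (Finset.sum_eq_zero_iff_of_nonneg
        (fun j _ => sq_nonneg (x j))).mp hS0 i (Finset.mem_univ i)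
      exact pow_eq_zero_iff two_ne_zero |>.mp this
    intro x y hxy
    have hz : A.mulVec (x - y) = 0 := by rw [Matrix.mulVec_sub, hxy, sub_self]
    exact sub_eq_zero.mp (h0 _ hz)
  have hUnit : IsUnit A := Matrix.mulVec_injective_iff_isUnit.mp hinj
  have hdet : IsUnit A.det := (Matrix.isUnit_iff_isUnit_det A).mp hUnit
  refine ⟨hUnit, ?_⟩
  have hAAinv : ∀ v, A.mulVec (A⁻¹.mulVec v) = v := by
    intro v
    rw [Matrix.mulVec_mulVec, Matrix.mul_nonsing_inv _ hdet, Matrix.one_mulVec]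
  -- inverse bound
  have hinvb : ∀ v, en (A⁻¹.mulVec v) ≤ 2 / lammin * en v := by
    intro v
    set y := A⁻¹.mulVec v with hy
    have h1 : lammin / 2 * en y ^ 2 ≤ y ⬝ᵥ v := by
      rw [en_sq]
      calc lammin / 2 * ∑ i, y i ^ 2 ≤ y ⬝ᵥ A.mulVec y := hquad y
        _ = y ⬝ᵥ v := by rw [hy, hAAinv v]
    have h2 : y ⬝ᵥ v ≤ en y * en v := le_trans (le_abs_self _) (en_cs y v)
    by_cases h0 : en y = 0
    · rw [h0]; exact mul_nonneg (by positivity) (en_nonneg v)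
    · have hpos : 0 < en y := lt_of_le_of_ne (en_nonneg y) (Ne.symm h0)
      rw [div_mul_eq_mul_div, le_div_iff₀ hlam]
      nlinarith [en_nonneg v]
  -- the error vector
  have hterm2 : ∀ k, ((1 : Matrix (Fin 3) (Fin 3) ℝ) -
      Matrix.vecMulVec (u k) (u k)).mulVec (s₀ - p k) =
      ((uh k - u k) ⬝ᵥ (s₀ - p k)) • uh k + (u k ⬝ᵥ (s₀ - p k)) • (uh k - u k) := by
    intro k
    have hray2 := hray k
    rw [Matrix.sub_mulVec, Matrix.one_mulVec, vecMulVec_mulVec', sub_eq_zero] at hray2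
    rw [Matrix.sub_mulVec, Matrix.one_mulVec, vecMulVec_mulVec']
    nth_rewrite 1 [hray2]
    rw [sub_dotProduct, sub_smul, smul_sub]
    abel
  have hEk : ∀ k, en (((1 : Matrix (Fin 3) (Fin 3) ℝ) -
      Matrix.vecMulVec (u k) (u k)).mulVec (s₀ - p k)) ≤ 2 * ε * R := by
    intro k
    rw [hterm2 k]
    have ha : |(uh k - u k) ⬝ᵥ (s₀ - p k)| ≤ ε * R :=
      le_trans (en_cs _ _) (mul_le_mul (hd k) (hv k) (en_nonneg _) hε.le)
    have hb : |u k ⬝ᵥ (s₀ - p k)| ≤ R := by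
      have := en_cs (u k) (s₀ - p k)
      rw [hu1 k, one_mul] at this
      exact le_trans this (hv k)
    calc en _ ≤ en (((uh k - u k) ⬝ᵥ (s₀ - p k)) • uh k) +
          en ((u k ⬝ᵥ (s₀ - p k)) • (uh k - u k)) := en_add _ _
      _ = |(uh k - u k) ⬝ᵥ (s₀ - p k)| * en (uh k) +
          |u k ⬝ᵥ (s₀ - p k)| * en (uh k - u k) := by rw [en_smul, en_smul]
      _ ≤ (ε * R) * 1 + R * ε := by
          refine add_le_add ?_ ?_
          · rw [huh1 k]
            simpa using ha
          · exact mul_le_mul hb (hd k) (en_nonneg _) hR.le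
      _ = 2 * ε * R := by ring
  set b : Fin 3 → ℝ := ∑ k, w k •
      (((1 : Matrix (Fin 3) (Fin 3) ℝ) - Matrix.vecMulVec (u k) (u k)).mulVec (p k)) with hb
  have hEv : A.mulVec s₀ - b = ∑ k, w k • (((1 : Matrix (Fin 3) (Fin 3) ℝ) -
      Matrix.vecMulVec (u k) (u k)).mulVec (s₀ - p k)) := by
    rw [hA, sum_mulVec', hb, ← Finset.sum_sub_distrib]
    refine Finset.sum_congr rfl fun k _ => ?_
    rw [Matrix.smul_mulVec, ← smul_sub, ← Matrix.mulVec_sub]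
  have hEvb : en (A.mulVec s₀ - b) ≤ 2 * W * R * ε := by
    rw [hEv]
    calc en _ ≤ ∑ k, en (w k • (((1 : Matrix (Fin 3) (Fin 3) ℝ) -
          Matrix.vecMulVec (u k) (u k)).mulVec (s₀ - p k))) := en_sum _
      _ = ∑ k, w k * en (((1 : Matrix (Fin 3) (Fin 3) ℝ) -
          Matrix.vecMulVec (u k) (u k)).mulVec (s₀ - p k)) := by
          refine Finset.sum_congr rfl fun k _ => ?_
          rw [en_smul, abs_of_pos (hw k)]
      _ ≤ ∑ k, w k * (2 * ε * R) := Finset.sum_le_sum fun k _ =>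
          mul_le_mul_of_nonneg_left (hEk k) (hw k).le
      _ = W * (2 * ε * R) := by rw [← Finset.sum_mul, hWsum]
      _ = 2 * W * R * ε := by ring
  -- conclude
  have hss : sstar - s₀ = A⁻¹.mulVec (b - A.mulVec s₀) := by
    rw [hs, Matrix.mulVec_sub, Matrix.mulVec_mulVec,
      Matrix.nonsing_inv_mul _ hdet, Matrix.one_mulVec]
  have hfinal : en (sstar - s₀) ≤ 4 * W * R / lammin * ε := by
    rw [hss]
    calc en (A⁻¹.mulVec (b - A.mulVec s₀)) ≤ 2 / lammin * en (b - A.mulVec s₀) :=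
        hinvb _
      _ = 2 / lammin * en (A.mulVec s₀ - b) := by rw [← en_neg, neg_sub]
      _ ≤ 2 / lammin * (2 * W * R * ε) :=
        mul_le_mul_of_nonneg_left hEvb (by positivity)
      _ = 4 * W * R / lammin * ε := by field_simp; ring
  have hgoal : ∑ i, (sstar i - s₀ i) ^ 2 = en (sstar - s₀) ^ 2 := by
    rw [en_sq]
    exact Finset.sum_congr rfl fun i _ => by rw [Pi.sub_apply]
  rw [hgoal]
  exact pow_le_pow_left₀ (en_nonneg _) hfinal 2
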